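/- (Bellaïche–Chenevier) Let (A, m, k) be a complete local domain with char(k) ≠ 2 and ρ : G → GL_2(Frac(A)) a representation of a group G with tr ρ(G) ⊂ A and tr ρ mod m = ψ_1 + ψ_2 for distinct characters ψ_1, ψ_2 : G → k^×. Choose g_0 ∈ G with ψ_1(g_0) ≠ ψ_2(g_0), let λ_1, λ_2 ∈ A be the roots of the characteristic polynomial of ρ(g_0) (which exist by Hensel's lemma), and choose a basis diagonalizing ρ(g_0). Write ρ(g) = (a(g), b(g); c(g), d(g)). Let I ⊊ A be an ideal such that tr ρ mod I = ϑ_1 + ϑ_2 for characters ϑ_1, ϑ_2 : G → (A/I)^× with ϑ_i lifting ψ_i. Then for all g, g' ∈ G: a(g), d(g) ∈ A, a(g) ≡ ϑ_1(g) mod I, d(g) ≡ ϑ_2(g) mod I, and b(g)c(g') ∈ I. -/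

import Mathlib

open IsLocalRing

/-- **Bellaïche–Chenevier.**  Let `(A, m, k)` be a complete local Noetherian
domain with `char k ≠ 2` and `ρ : G → GL₂(Frac A)` a representation with `tr ρ(G) ⊆ A` and
`tr ρ mod m = ψ₁ + ψ₂` for distinct characters `ψ₁ ψ₂ : G → kˣ`.  Fix `g₀` with
`ψ₁ g₀ ≠ ψ₂ g₀`, let `λ₁, λ₂ ∈ A` be the roots of the characteristic polynomial of `ρ g₀`
(lifting `ψᵢ(g₀)`), and work in a basis in which `ρ g₀ = diag(λ₁, λ₂)`.  If `I ⊊ A` is an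
ideal with `tr ρ mod I = ϑ₁ + ϑ₂` for characters `ϑᵢ` lifting `ψᵢ`, then for all `g, g'`:
the diagonal entries `a(g), d(g)` lie in `A` with `a(g) ≡ ϑ₁(g)`, `d(g) ≡ ϑ₂(g) mod I`,
and `b(g)c(g') ∈ I`. -/
theorem bellaiche_chenevier_lemma
    (A : Type*) [CommRing A] [IsDomain A] [IsLocalRing A] [IsNoetherianRing A]
    [IsAdicComplete (maximalIdeal A) A]
    (hchar : ringChar (ResidueField A) ≠ 2)
    (K : Type*) [Field K] [Algebra A K] [IsFractionRing A K]
    (G : Type*) [Group G]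
    (ρ : G →* GL (Fin 2) K)
    (tA : G → A)
    (htr : ∀ g : G, algebraMap A K (tA g) = Matrix.trace (ρ g : Matrix (Fin 2) (Fin 2) K))
    (ψ₁ ψ₂ : G →* (ResidueField A)ˣ) (hψ : ψ₁ ≠ ψ₂)
    (hres : ∀ g : G, residue A (tA g) = ↑(ψ₁ g) + ↑(ψ₂ g))
    (g₀ : G) (hg₀ : ψ₁ g₀ ≠ ψ₂ g₀)
    (lam₁ lam₂ : A)
    (hlam₁ : residue A lam₁ = ↑(ψ₁ g₀)) (hlam₂ : residue A lam₂ = ↑(ψ₂ g₀))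
    (hdiag : (ρ g₀ : Matrix (Fin 2) (Fin 2) K) =
      Matrix.diagonal ![algebraMap A K lam₁, algebraMap A K lam₂])
    (I : Ideal A) (hI : I ≠ ⊤)
    (ϑ₁ ϑ₂ : G →* (A ⧸ I)ˣ)
    (hϑtr : ∀ g : G, Ideal.Quotient.mk I (tA g) = ↑(ϑ₁ g) + ↑(ϑ₂ g))
    (hlift₁ : ∀ g : G,
      (↑(ψ₁ g) : ResidueField A) =
        Ideal.Quotient.factor (le_maximalIdeal hI) ↑(ϑ₁ g))
    (hlift₂ : ∀ g : G,
      (↑(ψ₂ g) : ResidueField A) =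
        Ideal.Quotient.factor (le_maximalIdeal hI) ↑(ϑ₂ g)) :
    ∀ g g' : G, ∃ a d : A,
      algebraMap A K a = (ρ g : Matrix (Fin 2) (Fin 2) K) 0 0 ∧
      algebraMap A K d = (ρ g : Matrix (Fin 2) (Fin 2) K) 1 1 ∧
      Ideal.Quotient.mk I a = ↑(ϑ₁ g) ∧
      Ideal.Quotient.mk I d = ↑(ϑ₂ g) ∧
      ∃ x ∈ I, algebraMap A K x =
        (ρ g : Matrix (Fin 2) (Fin 2) K) 0 1 * (ρ g' : Matrix (Fin 2) (Fin 2) K) 1 0 := by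
  intro g g'
  have hinj : Function.Injective (algebraMap A K) := IsFractionRing.injective A K
  set f := algebraMap A K with hf
  set Q := Ideal.Quotient.mk I with hQ
  set M : Matrix (Fin 2) (Fin 2) K := (ρ g : Matrix (Fin 2) (Fin 2) K) with hM
  set N : Matrix (Fin 2) (Fin 2) K := (ρ g' : Matrix (Fin 2) (Fin 2) K) with hN
  have hmul : ∀ x y : G, ((ρ (x*y)) : Matrix (Fin 2) (Fin 2) K)
      = (ρ x : Matrix (Fin 2) (Fin 2) K) * (ρ y : Matrix (Fin 2) (Fin 2) K) := by
    intro x y; rw [map_mul]; rfl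
  -- λ₁ - λ₂ is a unit
  have hures : residue A (lam₁ - lam₂) ≠ 0 := by
    rw [map_sub, hlam₁, hlam₂, sub_ne_zero]
    exact fun h => hg₀ (Units.ext h)
  have hu : IsUnit (lam₁ - lam₂) := by
    by_contra h
    exact hures (Ideal.Quotient.eq_zero_iff_mem.mpr h)
  obtain ⟨v, hv⟩ := hu.exists_left_inv
  have hune : lam₁ - lam₂ ≠ 0 := fun h => hures (by rw [h, map_zero])
  have hfu : f lam₁ - f lam₂ ≠ 0 := by
    rw [← map_sub]; exact fun h => hune (hinj (by rw [h, map_zero]))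
  -- trace computations in K
  have trg : ∀ x : G, f (tA x) = (ρ x : Matrix (Fin 2) (Fin 2) K) 0 0
      + (ρ x : Matrix (Fin 2) (Fin 2) K) 1 1 := by
    intro x; rw [htr, Matrix.trace_fin_two]
  have trg0 : ∀ x : G, f (tA (g₀*x)) = f lam₁ * (ρ x : Matrix (Fin 2) (Fin 2) K) 0 0
      + f lam₂ * (ρ x : Matrix (Fin 2) (Fin 2) K) 1 1 := by
    intro x
    rw [htr, hmul, hdiag, Matrix.trace_fin_two, Matrix.diagonal_mul, Matrix.diagonal_mul]
    simp
  -- entries of products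
  have hMN : ∀ (i j : Fin 2), ((ρ (g*g') : Matrix (Fin 2) (Fin 2) K)) i j
      = M i 0 * N 0 j + M i 1 * N 1 j := by
    intro i j
    rw [hmul, Matrix.mul_apply, Fin.sum_univ_two, hM, hN]
  -- λ̄ᵢ ≡ ϑᵢ(g₀) mod I
  have h2 : IsUnit (2 : A) := by
    by_contra h
    have h0 : (2 : ResidueField A) = 0 := by
      have : residue A 2 = 0 := Ideal.Quotient.eq_zero_iff_mem.mpr h
      rwa [map_ofNat] at this
    exact Ring.two_ne_zero hchar h0
  have ht0 : tA g₀ = lam₁ + lam₂ := by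
    apply hinj
    rw [htr, hdiag, map_add, Matrix.trace_diagonal, Fin.sum_univ_two]
    simp
  have ht00 : tA (g₀*g₀) = lam₁*lam₁ + lam₂*lam₂ := by
    apply hinj
    rw [htr, hmul, hdiag, Matrix.trace_fin_two, Matrix.diagonal_mul, Matrix.diagonal_mul]
    simp [Matrix.diagonal]
  have hQmul : ∀ (ϑ : G →* (A ⧸ I)ˣ) (x y : G),
      ((ϑ (x*y) : (A ⧸ I)ˣ) : A ⧸ I) = (ϑ x : A ⧸ I) * (ϑ y : A ⧸ I) := by
    intro ϑ x y; rw [map_mul]; rfl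
  have hsum : Q lam₁ + Q lam₂ = (ϑ₁ g₀ : A ⧸ I) + (ϑ₂ g₀ : A ⧸ I) := by
    rw [← map_add, ← ht0, hQ]; exact hϑtr g₀
  have hsq : Q lam₁ * Q lam₁ + Q lam₂ * Q lam₂
      = (ϑ₁ g₀ : A ⧸ I) * (ϑ₁ g₀ : A ⧸ I) + (ϑ₂ g₀ : A ⧸ I) * (ϑ₂ g₀ : A ⧸ I) := by
    have h := hϑtr (g₀*g₀)
    rw [ht00, hQmul, hQmul] at h
    rw [← map_mul, ← map_mul, ← map_add, hQ, h]
  have hprod : Q lam₁ * Q lam₂ = (ϑ₁ g₀ : A ⧸ I) * (ϑ₂ g₀ : A ⧸ I) := by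
    have h2I : IsUnit (Q (2 : A)) := h2.map Q
    have h2' : Q 2 * (Q lam₁ * Q lam₂) = Q 2 * ((ϑ₁ g₀ : A ⧸ I) * (ϑ₂ g₀ : A ⧸ I)) := by
      have h2eq : (Q (2:A)) = (2 : A ⧸ I) := by rw [map_ofNat]
      rw [h2eq]
      linear_combination (Q lam₁ + Q lam₂ + (ϑ₁ g₀ : A ⧸ I) + (ϑ₂ g₀ : A ⧸ I)) * hsum - hsq
    exact h2I.mul_left_cancel h2'
  -- unit in A/I from nonzero residue
  have hunitQ : ∀ x : A, residue A x ≠ 0 → IsUnit (Q x) := by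
    intro x hx
    have hxu : IsUnit x := by
      by_contra h
      exact hx (Ideal.Quotient.eq_zero_iff_mem.mpr h)
    exact hxu.map Q
  have hfactor : ∀ x : A, Ideal.Quotient.factor (le_maximalIdeal hI) (Q x)
      = residue A x := fun x => Ideal.Quotient.factor_mk (le_maximalIdeal hI) x
  have hlam1I : Q lam₁ = (ϑ₁ g₀ : A ⧸ I) := by
    obtain ⟨w, hw⟩ := Ideal.Quotient.mk_surjective ((ϑ₂ g₀ : A ⧸ I))
    have hwu : IsUnit (Q (lam₁ - w)) := by
      apply hunitQ
      have hwres : Ideal.Quotient.factor (le_maximalIdeal hI) (Q w)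
          = (↑(ψ₂ g₀) : ResidueField A) := by rw [hQ, hw, ← hlift₂]
      rw [hfactor] at hwres
      rw [map_sub, hlam₁, hwres, sub_ne_zero]
      exact fun h => hg₀ (Units.ext h)
    have hkey : Q (lam₁ - w) * (Q lam₁ - (ϑ₁ g₀ : A ⧸ I)) = 0 := by
      rw [map_sub, hw]
      linear_combination (Q lam₁) * hsum - hprod
    exact sub_eq_zero.mp ((hwu.mul_right_eq_zero).mp hkey)
  have hlam2I : Q lam₂ = (ϑ₂ g₀ : A ⧸ I) := by linear_combination hsum - hlam1I
  have huQ : IsUnit (Q (lam₁ - lam₂)) := hunitQ _ hures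
  have huQ' : IsUnit (Q lam₁ - Q lam₂) := by rw [← map_sub]; exact huQ
  -- definitions of a and d
  set a : A := v * (tA (g₀*g) - lam₂ * tA g) with ha
  set d : A := v * (lam₁ * tA g - tA (g₀*g)) with hd
  have hua : (lam₁ - lam₂) * a = tA (g₀*g) - lam₂ * tA g := by
    rw [ha]; linear_combination (tA (g₀*g) - lam₂ * tA g) * hv
  have hud : (lam₁ - lam₂) * d = lam₁ * tA g - tA (g₀*g) := by
    rw [hd]; linear_combination (lam₁ * tA g - tA (g₀*g)) * hv
  refine ⟨a, d, ?_, ?_, ?_, ?_, ?_⟩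
  · -- f a = M 0 0
    apply mul_left_cancel₀ hfu
    have h : (f lam₁ - f lam₂) * f a = f (tA (g₀*g)) - f lam₂ * f (tA g) := by
      simp only [← map_sub, ← map_mul]; exact congrArg f hua
    rw [trg0 g, trg g, ← hM] at h
    linear_combination h
  · -- f d = M 1 1
    apply mul_left_cancel₀ hfu
    have h : (f lam₁ - f lam₂) * f d = f lam₁ * f (tA g) - f (tA (g₀*g)) := by
      simp only [← map_sub, ← map_mul]; exact congrArg f hud
    rw [trg0 g, trg g, ← hM] at h
    linear_combination h
  · -- Q a = ϑ₁ g
    have h : (Q lam₁ - Q lam₂) * Q a = Q (tA (g₀*g)) - Q lam₂ * Q (tA g) := by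
      simp only [← map_sub, ← map_mul]; exact congrArg Q hua
    rw [hϑtr (g₀*g), hϑtr g, hQmul, hQmul] at h
    refine huQ'.mul_left_cancel ?_
    rw [hlam1I, hlam2I] at h ⊢
    linear_combination h
  · -- Q d = ϑ₂ g
    have h : (Q lam₁ - Q lam₂) * Q d = Q lam₁ * Q (tA g) - Q (tA (g₀*g)) := by
      simp only [← map_sub, ← map_mul]; exact congrArg Q hud
    rw [hϑtr (g₀*g), hϑtr g, hQmul, hQmul] at h
    refine huQ'.mul_left_cancel ?_
    rw [hlam1I, hlam2I] at h ⊢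
    linear_combination h
  · -- the off-diagonal product
    set x : A := v * (tA (g₀*(g*g')) - lam₂ * tA (g*g'))
        - (v * (tA (g₀*g) - lam₂ * tA g)) * (v * (tA (g₀*g') - lam₂ * tA g')) with hx
    have hkey : (lam₁ - lam₂) * ((lam₁ - lam₂) * x)
        = (lam₁ - lam₂) * (tA (g₀*(g*g')) - lam₂ * tA (g*g'))
          - (tA (g₀*g) - lam₂ * tA g) * (tA (g₀*g') - lam₂ * tA g') := by
      rw [hx]
      linear_combination ((lam₁ - lam₂) * (tA (g₀*(g*g')) - lam₂ * tA (g*g'))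
        - (tA (g₀*g) - lam₂ * tA g) * (tA (g₀*g') - lam₂ * tA g')
          * ((lam₁ - lam₂) * v + 1)) * hv
    refine ⟨x, ?_, ?_⟩
    · -- x ∈ I, i.e. Q x = 0
      have h : (Q lam₁ - Q lam₂) * ((Q lam₁ - Q lam₂) * Q x)
          = (Q lam₁ - Q lam₂) * (Q (tA (g₀*(g*g'))) - Q lam₂ * Q (tA (g*g')))
            - (Q (tA (g₀*g)) - Q lam₂ * Q (tA g))
              * (Q (tA (g₀*g')) - Q lam₂ * Q (tA g')) := by
        simp only [← map_sub, ← map_mul]; exact congrArg Q hkey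
      rw [hϑtr (g₀*(g*g')), hϑtr (g*g'), hϑtr (g₀*g), hϑtr (g₀*g'), hϑtr g, hϑtr g'] at h
      simp only [map_mul, Units.val_mul] at h
      rw [hlam1I, hlam2I] at h
      have hz : Q x = 0 := by
        refine huQ'.mul_left_cancel (huQ'.mul_left_cancel ?_)
        rw [hlam1I, hlam2I]
        linear_combination h
      exact Ideal.Quotient.eq_zero_iff_mem.mp hz
    · -- f x = M 0 1 * N 1 0
      apply mul_left_cancel₀ hfu
      apply mul_left_cancel₀ hfu
      have h : (f lam₁ - f lam₂) * ((f lam₁ - f lam₂) * f x)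
          = (f lam₁ - f lam₂) * (f (tA (g₀*(g*g'))) - f lam₂ * f (tA (g*g')))
            - (f (tA (g₀*g)) - f lam₂ * f (tA g))
              * (f (tA (g₀*g')) - f lam₂ * f (tA g')) := by
        simp only [← map_sub, ← map_mul]; exact congrArg f hkey
      rw [trg0 (g*g'), trg0 g, trg0 g', trg (g*g'), trg g, trg g',
        hMN 0 0, hMN 1 1, ← hM, ← hN] at h
      linear_combination h
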